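/- Hamming-to-Ulam construction: suppose n/r is even, d ≤ r, P = [n/2], Q = [n] \ P; let C'_1 be a code of permutations of P with minimum r-regular Ulam distance ≥ d, and C_1 a code of permutations of Q with minimum r-regular Hamming distance ≥ d. Then the block-interleaved code C = C'_1 ∘_r C_1 (blocks of r elements alternating between the two codes, closed under ≡_r) has minimum r-regular Ulam distance at least d. -/

import Mathlib

/-- The `r`-regular multipermutation associated with a permutation `π` of `Fin n`:
`mp n r π j` is the (0-indexed) rank block of element `j`, i.e. `⌊π⁻¹(j)/r⌋`. -/
def mp (n r : ℕ) (π : Equiv.Perm (Fin n)) (j : Fin n) : ℕ := (π.symm j : ℕ) / r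

/-- The `i`-th part of the ordered set partition associated with `π`:
the set of elements of rank block `i`. -/
def part (n r : ℕ) (π : Equiv.Perm (Fin n)) (i : ℕ) : Finset (Fin n) :=
  Finset.univ.filter fun j => mp n r π j = i

/-- The `r`-regular Hamming distance between permutations. -/
def hammR (n r : ℕ) (π σ : Equiv.Perm (Fin n)) : ℕ :=
  (Finset.univ.filter fun j => mp n r π j ≠ mp n r σ j).card

/-- Length of a longest common subsequence of two lists. -/
noncomputable def lcsLen {α : Type*} (A B : List α) : ℕ :=
  sSup {k | ∃ l : List α, l.length = k ∧ l.Sublist A ∧ l.Sublist B}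

/-- Ulam distance between two lists of the same length (length minus LCS length). -/
noncomputable def ulamList {α : Type*} (A B : List α) : ℕ := A.length - lcsLen A B

/-- The Ulam distance between two permutations of `Fin n`. -/
noncomputable def ulam (n : ℕ) (π σ : Equiv.Perm (Fin n)) : ℕ :=
  n - lcsLen (List.ofFn π) (List.ofFn σ)

/-- The `r`-regular Ulam distance: minimum Ulam distance between members of the
`≡_r`-equivalence classes of `π` and `σ`. -/
noncomputable def ulamR (n r : ℕ) (π σ : Equiv.Perm (Fin n)) : ℕ :=
  sInf {k | ∃ π' σ' : Equiv.Perm (Fin n),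
    mp n r π' = mp n r π ∧ mp n r σ' = mp n r σ ∧ k = ulam n π' σ'}

/-- The block-interleaved code `C'₁ ∘_r C₁`: blocks of `r` consecutive ranks
alternate between a codeword `π'` of the code `C'` over `P = [n/2]` (even rank
blocks) and a codeword `π₁` of the code `C1` over `Q = [n] \ P` (odd rank blocks);
the code is closed under `≡_r`.  An element `v` of `P` (embedded as `v`) has rank
block `2·m^r_{π'}(v)` and an element of `Q` (embedded as `v + n/2`) has rank block
`2·m^r_{π₁}(v) + 1`. -/
def blockCode (n r : ℕ) (h2 : n / 2 + n / 2 = n)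
    (C' C1 : Set (Equiv.Perm (Fin (n / 2)))) : Set (Equiv.Perm (Fin n)) :=
  {π | ∃ π' ∈ C', ∃ π₁ ∈ C1,
    (∀ v : Fin (n / 2),
      mp n r π ⟨(v : ℕ), by have := v.isLt; omega⟩ = 2 * mp (n / 2) r π' v) ∧
    (∀ v : Fin (n / 2),
      mp n r π ⟨(v : ℕ) + n / 2, by have := v.isLt; omega⟩ = 2 * mp (n / 2) r π₁ v + 1)}



theorem lcsLen_le {α : Type*} {A B : List α} {k : ℕ}
    (h : ∀ l : List α, l.Sublist A → l.Sublist B → l.length ≤ k) : lcsLen A B ≤ k := by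
  refine csSup_le' ?_
  rintro x ⟨l, rfl, h1, h2⟩
  exact h l h1 h2

theorem le_lcsLen {α : Type*} {A B l : List α} (h1 : l.Sublist A) (h2 : l.Sublist B) :
    l.length ≤ lcsLen A B := by
  refine le_csSup ⟨A.length, ?_⟩ ⟨l, rfl, h1, h2⟩
  rintro x ⟨m, rfl, hm1, hm2⟩
  exact hm1.length_le

theorem mp_lt (n r : ℕ) (hdvd : r ∣ n) (π : Equiv.Perm (Fin n)) (j : Fin n) :
    mp n r π j < n / r :=
  Nat.div_lt_div_of_lt_of_dvd hdvd (π.symm j).isLt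

theorem rel_of_pairwise {α : Type*} {R : α → α → Prop} {l : List α} (h : l.Pairwise R)
    {a b : α} (ha : a ∈ l) (hb : b ∈ l) (hne : a ≠ b) : R a b ∨ R b a := by
  induction l with
  | nil => simp at ha
  | cons x xs ih =>
    rcases List.pairwise_cons.mp h with ⟨hx, hxs⟩
    rcases List.mem_cons.mp ha with rfl | ha'
    · rcases List.mem_cons.mp hb with rfl | hb'
      · exact absurd rfl hne
      · exact Or.inl (hx _ hb')
    · rcases List.mem_cons.mp hb with rfl | hb'
      · exact Or.inr (hx _ ha')
      · exact ih hxs ha' hb'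

theorem part_card (n r : ℕ) (hr : 0 < r) (hdvd : r ∣ n) (π : Equiv.Perm (Fin n))
    (i : ℕ) (hi : i < n / r) : (part n r π i).card = r := by
  have hir : i * r + r ≤ n := by
    have h1 : (i + 1) * r ≤ (n / r) * r := Nat.mul_le_mul_right r hi
    rw [Nat.div_mul_cancel hdvd, add_mul, one_mul] at h1
    exact h1
  have himg : part n r π i
      = Finset.image (fun s : Fin r => π ⟨i * r + (s : ℕ), by have := s.isLt; omega⟩)
        Finset.univ := by
    ext j
    simp only [part, Finset.mem_filter, Finset.mem_univ, true_and, Finset.mem_image]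
    simp only [mp]
    constructor
    · intro hj
      have hmlt : (π.symm j : ℕ) % r < r := Nat.mod_lt _ hr
      refine ⟨⟨(π.symm j : ℕ) % r, hmlt⟩, ?_⟩
      have hdm : i * r + ((π.symm j : ℕ) % r) = (π.symm j : ℕ) := by
        conv_rhs => rw [← Nat.div_add_mod ((π.symm j : ℕ)) r]
        rw [hj]
        ring
      have heq : (⟨i * r + ((π.symm j : ℕ) % r), by omega⟩ : Fin n) = π.symm j :=
        Fin.ext hdm
      rw [heq, Equiv.apply_symm_apply]
    · rintro ⟨s, rfl⟩
      rw [Equiv.symm_apply_apply]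
      simp only
      rw [show i * r + (s : ℕ) = r * i + (s : ℕ) by ring, Nat.mul_add_div hr,
        Nat.div_eq_of_lt s.isLt, add_zero]
  rw [himg, Finset.card_image_of_injective _ ?_, Finset.card_univ, Fintype.card_fin]
  intro s1 s2 hs
  have hv := congrArg Fin.val (π.injective hs)
  simp only at hv
  exact Fin.ext (by omega)

theorem not_mem_of_crossing {n r : ℕ} (hr : 0 < r) (π' σ' : Equiv.Perm (Fin n))
    (l : List (Fin n)) (hlπ : l.Sublist (List.ofFn π')) (hlσ : l.Sublist (List.ofFn σ'))
    (j e : Fin n) (a b : ℕ) (hab : a < b)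
    (hja : mp n r π' j = 2 * a + 1) (hjb : mp n r σ' j = 2 * b + 1)
    (he : e ∈ l) (hea : mp n r π' e = 2 * a + 2) (heb : mp n r σ' e = 2 * a + 2) :
    j ∉ l := by
  intro hj
  have hne : j ≠ e := by
    intro h; rw [h, hea] at hja; omega
  have pw1 : l.Pairwise (fun x y => (π'.symm x : ℕ) < (π'.symm y : ℕ)) := by
    refine List.Pairwise.sublist hlπ (List.pairwise_ofFn.mpr ?_)
    intro i i' hii
    simpa using hii
  have pw2 : l.Pairwise (fun x y => (σ'.symm x : ℕ) < (σ'.symm y : ℕ)) := by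
    refine List.Pairwise.sublist hlσ (List.pairwise_ofFn.mpr ?_)
    intro i i' hii
    simpa using hii
  have pw := pw1.and pw2
  rcases rel_of_pairwise pw hj he hne with ⟨h1, h2⟩ | ⟨h1, h2⟩
  · have hle : mp n r σ' j ≤ mp n r σ' e := Nat.div_le_div_right (Nat.le_of_lt h2)
    rw [hjb, heb] at hle
    omega
  · have hle : mp n r π' e ≤ mp n r π' j := Nat.div_le_div_right (Nat.le_of_lt h1)
    rw [hea, hja] at hle
    omega

theorem psi_lt (r t i : ℕ) (hr : 0 < r) (hi : i < t * r) :
    2 * (i / r) * r + i % r < 2 * (t * r) := by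
  have h5 : i / r < t := by rwa [Nat.div_lt_iff_lt_mul hr]
  have h6 : i % r < r := Nat.mod_lt _ hr
  have h7 : (i / r + 1) * r ≤ t * r := Nat.mul_le_mul_right r (by omega)
  nlinarith

theorem psi_div (r i : ℕ) (hr : 0 < r) : (2 * (i / r) * r + i % r) / r = 2 * (i / r) := by
  rw [show 2 * (i / r) * r + i % r = r * (2 * (i / r)) + i % r by ring, Nat.mul_add_div hr,
    Nat.div_eq_of_lt (Nat.mod_lt _ hr), add_zero]

theorem psi_mod (r i : ℕ) (hr : 0 < r) : (2 * (i / r) * r + i % r) % r = i % r := by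
  rw [show 2 * (i / r) * r + i % r = r * (2 * (i / r)) + i % r by ring, Nat.mul_add_mod]
  exact Nat.mod_eq_of_lt (Nat.mod_lt _ hr)

theorem psi_mono (r : ℕ) (hr : 0 < r) {i j : ℕ} (h : i < j) :
    2 * (i / r) * r + i % r < 2 * (j / r) * r + j % r := by
  have hd : i / r ≤ j / r := Nat.div_le_div_right (le_of_lt h)
  rcases eq_or_lt_of_le hd with he | hlt
  · have di := Nat.div_add_mod i r
    have dj := Nat.div_add_mod j r
    rw [← he] at dj ⊢
    have : i % r < j % r := by nlinarith
    omega
  · have h6 : i % r < r := Nat.mod_lt _ hr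
    have h7 : (2 * (i / r) + 2) * r ≤ 2 * (j / r) * r := Nat.mul_le_mul_right r (by omega)
    nlinarith [Nat.zero_le (j % r)]

theorem half_perm (n r : ℕ) (hr : 0 < r) (hdvd : r ∣ n) (hev : Even (n / r))
    (h2 : n / 2 + n / 2 = n) (hn : 0 < n)
    (π' : Equiv.Perm (Fin n)) (m : Fin (n / 2) → ℕ)
    (heven : ∀ v : Fin (n / 2), mp n r π' ⟨(v : ℕ), by have := v.isLt; omega⟩ = 2 * m v)
    (hodd : ∀ v : Fin (n / 2),
      ¬ Even (mp n r π' ⟨(v : ℕ) + n / 2, by have := v.isLt; omega⟩)) :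
    ∃ ρ : Equiv.Perm (Fin (n / 2)),
      (∀ v, mp (n / 2) r ρ v = m v) ∧
      List.ofFn ⇑ρ = ((List.ofFn ⇑π').filter (fun j : Fin n => decide ((j : ℕ) < n / 2))).map
        (fun j : Fin n => (⟨(j : ℕ) % (n / 2), Nat.mod_lt _ (by omega)⟩ : Fin (n / 2))) := by
  obtain ⟨t, ht⟩ := hev
  have hnrr : n / r * r = n := Nat.div_mul_cancel hdvd
  have h4 : t * r + t * r = n := by
    calc t * r + t * r = (t + t) * r := by ring
    _ = (n / r) * r := by rw [ht]
    _ = n := hnrr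
  have hn2 : n / 2 = t * r := by omega
  have hn2pos : 0 < n / 2 := by omega
  set ψ : Fin (n / 2) → Fin n := fun i =>
    ⟨2 * ((i : ℕ) / r) * r + (i : ℕ) % r, by
      have h5 := psi_lt r t (i : ℕ) hr (by have := i.isLt; omega)
      omega⟩ with hψdef
  have hψmono : StrictMono ψ := by
    intro i j hij
    simp only [hψdef, Fin.lt_def]
    exact psi_mono r hr (Fin.lt_def.mp hij)
  have hψinj : Function.Injective ψ := hψmono.injective
  -- key list identity
  have hkey : (List.finRange n).filter (fun i : Fin n => decide (Even ((i : ℕ) / r)))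
      = (List.finRange (n / 2)).map ψ := by
    have hnd1 : ((List.finRange n).filter (fun i : Fin n => decide (Even ((i : ℕ) / r)))).Nodup :=
      (List.nodup_finRange n).filter _
    have hnd2 : ((List.finRange (n / 2)).map ψ).Nodup :=
      (List.nodup_finRange _).map hψinj
    have hmem : ∀ x, x ∈ (List.finRange n).filter (fun i : Fin n => decide (Even ((i : ℕ) / r)))
        ↔ x ∈ (List.finRange (n / 2)).map ψ := by
      intro x
      simp only [List.mem_filter, List.mem_finRange, true_and, List.mem_map,
        decide_eq_true_eq]
      constructor
      · intro hx
        obtain ⟨k, hk⟩ := hx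
        have h6 : (x : ℕ) % r < r := Nat.mod_lt _ hr
        have hx1 : (x : ℕ) / r < n / r := Nat.div_lt_div_of_lt_of_dvd hdvd x.isLt
        rw [ht] at hx1
        have hk2 : k + 1 ≤ t := by omega
        have hk3 := Nat.mul_le_mul_right r hk2
        refine ⟨⟨k * r + (x : ℕ) % r, by rw [hn2]; nlinarith⟩, ?_⟩
        apply Fin.ext
        simp only [hψdef]
        have hq : (k * r + (x : ℕ) % r) / r = k := by
          rw [show k * r + (x : ℕ) % r = r * k + (x : ℕ) % r by ring, Nat.mul_add_div hr,
            Nat.div_eq_of_lt h6, add_zero]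
        have hm : (k * r + (x : ℕ) % r) % r = (x : ℕ) % r := by
          rw [show k * r + (x : ℕ) % r = r * k + (x : ℕ) % r by ring, Nat.mul_add_mod]
          exact Nat.mod_eq_of_lt h6
        rw [hq, hm]
        have hdm := Nat.div_add_mod (x : ℕ) r
        rw [hk] at hdm
        nlinarith [hdm]
      · rintro ⟨i, rfl⟩
        show Even ((ψ i : ℕ) / r)
        simp only [hψdef]
        rw [psi_div r (i : ℕ) hr]
        exact even_two_mul _
    refine List.Perm.eq_of_pairwise' (r := fun a b : Fin n => a ≤ b) ?_ ?_
      ((List.perm_ext_iff_of_nodup hnd1 hnd2).mpr hmem)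
    · exact List.Pairwise.imp le_of_lt
        (List.Pairwise.sublist List.filter_sublist (List.pairwise_lt_finRange n))
    · refine List.Pairwise.imp le_of_lt ?_
      rw [List.pairwise_map]
      exact (List.pairwise_lt_finRange _).imp (fun h => hψmono h)
  -- purity
  have mp_congr : ∀ (j j' : Fin n), (j : ℕ) = (j' : ℕ) → mp n r π' j = mp n r π' j' :=
    fun j j' h => by rw [Fin.ext h]
  have hmpp : ∀ i : Fin n, mp n r π' (π' i) = (i : ℕ) / r := by
    intro i; simp [mp]
  have hpure : ∀ i : Fin n, ((π' i : ℕ) < n / 2 ↔ Even ((i : ℕ) / r)) := by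
    intro i
    constructor
    · intro h
      have h5 := heven ⟨(π' i : ℕ), h⟩
      have h6 : mp n r π' (π' i) = 2 * m ⟨(π' i : ℕ), h⟩ := by
        rw [← h5]
      rw [hmpp] at h6
      exact ⟨m ⟨(π' i : ℕ), h⟩, by omega⟩
    · intro h
      by_contra hlt
      have hv : (π' i : ℕ) - n / 2 < n / 2 := by have := (π' i).isLt; omega
      have h5 := hodd ⟨(π' i : ℕ) - n / 2, hv⟩
      have h6 : mp n r π' (π' i)
          = mp n r π' ⟨((⟨(π' i : ℕ) - n / 2, hv⟩ : Fin (n / 2)) : ℕ) + n / 2, by omega⟩ :=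
        mp_congr _ _ (by simp; omega)
      rw [hmpp] at h6
      exact h5 (h6 ▸ h)
  -- the permutation
  have hlt2 : ∀ i : Fin (n / 2), (π' (ψ i) : ℕ) < n / 2 := by
    intro i
    refine (hpure (ψ i)).mpr ?_
    show Even ((ψ i : ℕ) / r)
    simp only [hψdef]
    rw [psi_div r (i : ℕ) hr]
    exact even_two_mul _
  set f : Fin (n / 2) → Fin (n / 2) := fun i =>
    ⟨(π' (ψ i) : ℕ) % (n / 2), Nat.mod_lt _ hn2pos⟩ with hfdef
  have hfinj : Function.Injective f := by
    intro i j hij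
    have h1 := congrArg Fin.val hij
    simp only [hfdef] at h1
    rw [Nat.mod_eq_of_lt (hlt2 i), Nat.mod_eq_of_lt (hlt2 j)] at h1
    exact hψinj (π'.injective (Fin.ext h1))
  let ρ : Equiv.Perm (Fin (n / 2)) := Equiv.ofBijective f (Finite.injective_iff_bijective.mp hfinj)
  have hρapp : ∀ i, ρ i = f i := fun i => rfl
  refine ⟨ρ, ?_, ?_⟩
  · intro v
    have hv : f (ρ.symm v) = v := by rw [← hρapp]; exact ρ.apply_symm_apply v
    have h1 : (π' (ψ (ρ.symm v)) : ℕ) = (v : ℕ) := by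
      have h0 := congrArg Fin.val hv
      simp only [hfdef] at h0
      rwa [Nat.mod_eq_of_lt (hlt2 _)] at h0
    have h3 : π'.symm (⟨(v : ℕ), by have := v.isLt; omega⟩ : Fin n) = ψ (ρ.symm v) := by
      rw [show (⟨(v : ℕ), by have := v.isLt; omega⟩ : Fin n) = π' (ψ (ρ.symm v)) from
        (Fin.ext h1.symm), Equiv.symm_apply_apply]
    have h5 : mp n r π' ⟨(v : ℕ), by have := v.isLt; omega⟩ = 2 * ((ρ.symm v : ℕ) / r) := by
      rw [mp, h3]
      show ((ψ (ρ.symm v) : ℕ)) / r = _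
      simp only [hψdef]
      exact psi_div r _ hr
    have h6 := heven v
    show (ρ.symm v : ℕ) / r = m v
    omega
  · have hofn : List.ofFn ⇑π' = (List.finRange n).map ⇑π' := List.ofFn_eq_map
    have hFc : (List.ofFn ⇑π').filter (fun j : Fin n => decide ((j : ℕ) < n / 2))
        = List.ofFn (fun i => π' (ψ i)) := by
      rw [hofn, List.filter_map]
      rw [show ((fun j : Fin n => decide ((j : ℕ) < n / 2)) ∘ ⇑π')
          = (fun i : Fin n => decide (Even ((i : ℕ) / r))) from
        funext fun i => decide_eq_decide.mpr (hpure i)]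
      rw [hkey, List.map_map]
      exact (List.ofFn_eq_map (f := fun i => π' (ψ i))).symm
    rw [hFc, List.map_ofFn]
    exact congrArg List.ofFn (funext fun i => rfl)

/-- Hamming-to-Ulam construction: if `n/r` is even, `d ≤ r`, `C'` is a code of
permutations of the first half with minimum `r`-regular Ulam distance at least `d`,
and `C1` is a code of permutations of the second half with minimum `r`-regular
Hamming distance at least `d`, then the block-interleaved code `C' ∘_r C1` has
minimum `r`-regular Ulam distance at least `d`. -/
theorem block_interleave_distance (n r d : ℕ) (hn : 0 < n) (hr : 0 < r)
    (hdvd : r ∣ n) (h2 : n / 2 + n / 2 = n) (heven : Even (n / r)) (hdr : d ≤ r)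
    (C' C1 : Set (Equiv.Perm (Fin (n / 2))))
    (hC' : ∀ π ∈ C', ∀ σ ∈ C',
      mp (n / 2) r π ≠ mp (n / 2) r σ → d ≤ ulamR (n / 2) r π σ)
    (hC1 : ∀ π ∈ C1, ∀ σ ∈ C1,
      mp (n / 2) r π ≠ mp (n / 2) r σ → d ≤ hammR (n / 2) r π σ) :
    ∀ π ∈ blockCode n r h2 C' C1, ∀ σ ∈ blockCode n r h2 C' C1,
      mp n r π ≠ mp n r σ → d ≤ ulamR n r π σ := by
  intro π hπ σ hσ hne
  obtain ⟨πP, hπPm, π1, hπ1m, hπe, hπo⟩ := hπ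
  obtain ⟨σP, hσPm, σ1, hσ1m, hσe, hσo⟩ := hσ
  have hrn : r ≤ n := Nat.le_of_dvd hn hdvd
  have hdn : d ≤ n := le_trans hdr hrn
  refine le_csInf ⟨ulam n π σ, π, σ, rfl, rfl, rfl⟩ ?_
  rintro k ⟨π', σ', hπ', hσ', rfl⟩
  have hmpπ' : ∀ j, mp n r π' j = mp n r π j := fun j => congrFun hπ' j
  have hmpσ' : ∀ j, mp n r σ' j = mp n r σ j := fun j => congrFun hσ' j
  have hbound : lcsLen (List.ofFn ⇑π') (List.ofFn ⇑σ') ≤ n - d := by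
    by_cases hP : mp (n / 2) r πP = mp (n / 2) r σP
    · -- C'-components equivalent: use Hamming distance of the C1 parts
      have h1ne : mp (n / 2) r π1 ≠ mp (n / 2) r σ1 := by
        intro hq
        apply hne
        funext j
        by_cases hj : (j : ℕ) < n / 2
        · have ha : mp n r π j = 2 * mp (n / 2) r πP ⟨(j : ℕ), hj⟩ := hπe ⟨(j : ℕ), hj⟩
          have hb : mp n r σ j = 2 * mp (n / 2) r σP ⟨(j : ℕ), hj⟩ := hσe ⟨(j : ℕ), hj⟩
          rw [ha, hb, hP]
        · have hv : (j : ℕ) - n / 2 < n / 2 := by have := j.isLt; omega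
          have hjv : (⟨((⟨(j : ℕ) - n / 2, hv⟩ : Fin (n / 2)) : ℕ) + n / 2,
              by omega⟩ : Fin n) = j := Fin.ext (by simp; omega)
          have ha : mp n r π j = 2 * mp (n / 2) r π1 ⟨(j : ℕ) - n / 2, hv⟩ + 1 := by
            have h0 := hπo ⟨(j : ℕ) - n / 2, hv⟩
            rwa [hjv] at h0
          have hb : mp n r σ j = 2 * mp (n / 2) r σ1 ⟨(j : ℕ) - n / 2, hv⟩ + 1 := by
            have h0 := hσo ⟨(j : ℕ) - n / 2, hv⟩
            rwa [hjv] at h0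
          rw [ha, hb, hq]
      have hdH : d ≤ hammR (n / 2) r π1 σ1 := hC1 π1 hπ1m σ1 hσ1m h1ne
      have hDd : d ≤ (Finset.univ.filter fun j : Fin n => mp n r π j ≠ mp n r σ j).card := by
        refine le_trans hdH (Finset.card_le_card_of_injOn
          (fun v : Fin (n / 2) => (⟨(v : ℕ) + n / 2, by have := v.isLt; omega⟩ : Fin n))
          ?_ ?_)
        · intro v hv
          simp only [Finset.mem_coe, Finset.mem_filter, Finset.mem_univ, true_and] at hv ⊢
          rw [hπo v, hσo v]
          omega
        · intro v1 _ v2 _ hv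
          have := congrArg Fin.val hv
          simp only at this
          exact Fin.ext (by omega)
      apply lcsLen_le
      intro l h1 h2'
      have hnd : l.Nodup := List.Nodup.sublist h1 (List.nodup_ofFn.mpr π'.injective)
      by_cases hmiss : ∃ k, 0 < k ∧ 2 * k < n / r ∧ ∀ x ∈ l, mp n r π x ≠ 2 * k
      · obtain ⟨k, hk0, hklt, hkm⟩ := hmiss
        have hsub : l.toFinset ⊆ (part n r π (2 * k))ᶜ := by
          intro x hx
          rw [Finset.mem_compl]
          intro hxp
          simp only [part, Finset.mem_filter, Finset.mem_univ, true_and] at hxp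
          exact hkm x (List.mem_toFinset.mp hx) hxp
        have hcard := Finset.card_le_card hsub
        rw [List.toFinset_card_of_nodup hnd, Finset.card_compl,
          part_card n r hr hdvd π _ hklt, Fintype.card_fin] at hcard
        omega
      · push_neg at hmiss
        have hsafe : ∀ j ∈ l, mp n r π j = mp n r σ j := by
          intro j hj
          by_contra hneq
          by_cases hjlt : (j : ℕ) < n / 2
          · apply hneq
            have ha : mp n r π j = 2 * mp (n / 2) r πP ⟨(j : ℕ), hjlt⟩ := hπe ⟨(j : ℕ), hjlt⟩
            have hb : mp n r σ j = 2 * mp (n / 2) r σP ⟨(j : ℕ), hjlt⟩ := hσe ⟨(j : ℕ), hjlt⟩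
            rw [ha, hb, hP]
          · have hv : (j : ℕ) - n / 2 < n / 2 := by have := j.isLt; omega
            have hjv : (⟨((⟨(j : ℕ) - n / 2, hv⟩ : Fin (n / 2)) : ℕ) + n / 2,
                by omega⟩ : Fin n) = j := Fin.ext (by simp; omega)
            have ha : mp n r π j = 2 * mp (n / 2) r π1 ⟨(j : ℕ) - n / 2, hv⟩ + 1 := by
              have h0 := hπo ⟨(j : ℕ) - n / 2, hv⟩
              rwa [hjv] at h0
            have hb : mp n r σ j = 2 * mp (n / 2) r σ1 ⟨(j : ℕ) - n / 2, hv⟩ + 1 := by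
              have h0 := hσo ⟨(j : ℕ) - n / 2, hv⟩
              rwa [hjv] at h0
            set a := mp (n / 2) r π1 ⟨(j : ℕ) - n / 2, hv⟩ with hadef
            set b := mp (n / 2) r σ1 ⟨(j : ℕ) - n / 2, hv⟩ with hbdef
            have hab : a ≠ b := by intro h; exact hneq (by rw [ha, hb, h])
            have hxlt_of : ∀ (x : Fin n) (c : ℕ), mp n r π x = 2 * c → (x : ℕ) < n / 2 := by
              intro x c hc
              by_contra hxge
              have hvx : (x : ℕ) - n / 2 < n / 2 := by have := x.isLt; omega
              have hxv : (⟨((⟨(x : ℕ) - n / 2, hvx⟩ : Fin (n / 2)) : ℕ) + n / 2,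
                  by omega⟩ : Fin n) = x := Fin.ext (by simp; omega)
              have hox : mp n r π x = 2 * mp (n / 2) r π1 ⟨(x : ℕ) - n / 2, hvx⟩ + 1 := by
                have h0 := hπo ⟨(x : ℕ) - n / 2, hvx⟩
                rwa [hxv] at h0
              omega
            have hxσ_of : ∀ (x : Fin n) (c : ℕ), mp n r π x = 2 * c → mp n r σ x = 2 * c := by
              intro x c hc
              have hxlt := hxlt_of x c hc
              have hax : mp n r π x = 2 * mp (n / 2) r πP ⟨(x : ℕ), hxlt⟩ :=
                hπe ⟨(x : ℕ), hxlt⟩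
              have hbx : mp n r σ x = 2 * mp (n / 2) r σP ⟨(x : ℕ), hxlt⟩ :=
                hσe ⟨(x : ℕ), hxlt⟩
              rw [hbx, ← hP, ← hax, hc]
            rcases Nat.lt_or_ge a b with hlt | hge
            · obtain ⟨x, hxl, hxmp⟩ := hmiss (a + 1) (by omega)
                (by have := mp_lt n r hdvd σ j; omega)
              exact not_mem_of_crossing hr π' σ' l h1 h2' j x a b hlt
                ((hmpπ' j).trans ha) ((hmpσ' j).trans hb) hxl
                (by rw [hmpπ' x, hxmp]; ring)
                (by rw [hmpσ' x, hxσ_of x (a + 1) hxmp]; ring) hj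
            · have hblt : b < a := by omega
              obtain ⟨x, hxl, hxmp⟩ := hmiss (b + 1) (by omega)
                (by have := mp_lt n r hdvd π j; omega)
              exact not_mem_of_crossing hr σ' π' l h2' h1 j x b a hblt
                ((hmpσ' j).trans hb) ((hmpπ' j).trans ha) hxl
                (by rw [hmpσ' x, hxσ_of x (b + 1) hxmp]; ring)
                (by rw [hmpπ' x, hxmp]; ring) hj
        have hsub : l.toFinset ⊆
            (Finset.univ.filter fun j : Fin n => mp n r π j ≠ mp n r σ j)ᶜ := by
          intro x hx
          rw [Finset.mem_compl]
          simp only [Finset.mem_filter, Finset.mem_univ, true_and, not_not]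
          exact hsafe x (List.mem_toFinset.mp hx)
        have hcard := Finset.card_le_card hsub
        have hDn : (Finset.univ.filter fun j : Fin n =>
            mp n r π j ≠ mp n r σ j).card ≤ n := by
          have := Finset.card_le_univ
            (Finset.univ.filter fun j : Fin n => mp n r π j ≠ mp n r σ j)
          simpa using this
        rw [List.toFinset_card_of_nodup hnd, Finset.card_compl, Fintype.card_fin] at hcard
        omega
    · -- C'-components inequivalent: use Ulam distance of the C' parts
      have heπ : ∀ v : Fin (n / 2),
          mp n r π' ⟨(v : ℕ), by have := v.isLt; omega⟩ = 2 * mp (n / 2) r πP v :=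
        fun v => (hmpπ' _).trans (hπe v)
      have hoπ : ∀ v : Fin (n / 2),
          ¬ Even (mp n r π' ⟨(v : ℕ) + n / 2, by have := v.isLt; omega⟩) := by
        intro v hE
        rw [hmpπ' _, hπo v] at hE
        obtain ⟨c, hc⟩ := hE
        omega
      have heσ : ∀ v : Fin (n / 2),
          mp n r σ' ⟨(v : ℕ), by have := v.isLt; omega⟩ = 2 * mp (n / 2) r σP v :=
        fun v => (hmpσ' _).trans (hσe v)
      have hoσ : ∀ v : Fin (n / 2),
          ¬ Even (mp n r σ' ⟨(v : ℕ) + n / 2, by have := v.isLt; omega⟩) := by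
        intro v hE
        rw [hmpσ' _, hσo v] at hE
        obtain ⟨c, hc⟩ := hE
        omega
      obtain ⟨ρπ, hρπm, hρπl⟩ := half_perm n r hr hdvd heven h2 hn π' _ heπ hoπ
      obtain ⟨ρσ, hρσm, hρσl⟩ := half_perm n r hr hdvd heven h2 hn σ' _ heσ hoσ
      have hPd : d ≤ ulamR (n / 2) r πP σP := hC' πP hπPm σP hσPm hP
      have hdu : d ≤ ulam (n / 2) ρπ ρσ :=
        le_trans hPd (Nat.sInf_le ⟨ρπ, ρσ, funext hρπm, funext hρσm, rfl⟩)
      have hlcsρ : lcsLen (List.ofFn ⇑ρπ) (List.ofFn ⇑ρσ) ≤ n / 2 :=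
        lcsLen_le fun l hA _ => by simpa using hA.length_le
      have hdu2 : lcsLen (List.ofFn ⇑ρπ) (List.ofFn ⇑ρσ) ≤ n / 2 - d ∧ d ≤ n / 2 := by
        unfold ulam at hdu
        omega
      apply lcsLen_le
      intro l h1 h2'
      have hnd : l.Nodup := List.Nodup.sublist h1 (List.nodup_ofFn.mpr π'.injective)
      have hsub1 : ((l.filter (fun j : Fin n => decide ((j : ℕ) < n / 2))).map
          (fun j : Fin n => (⟨(j : ℕ) % (n / 2), Nat.mod_lt _ (by omega)⟩ : Fin (n / 2)))).Sublist
          (List.ofFn ⇑ρπ) := by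
        rw [hρπl]
        exact (h1.filter _).map _
      have hsub2 : ((l.filter (fun j : Fin n => decide ((j : ℕ) < n / 2))).map
          (fun j : Fin n => (⟨(j : ℕ) % (n / 2), Nat.mod_lt _ (by omega)⟩ : Fin (n / 2)))).Sublist
          (List.ofFn ⇑ρσ) := by
        rw [hρσl]
        exact (h2'.filter _).map _
      have hlen1 : (l.filter (fun j : Fin n => decide ((j : ℕ) < n / 2))).length ≤ n / 2 - d := by
        have := le_lcsLen hsub1 hsub2
        rw [List.length_map] at this
        omega
      have hlen2 : (l.filter (fun j : Fin n => !(decide ((j : ℕ) < n / 2)))).length ≤ n / 2 := by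
        have hndq : (l.filter (fun j : Fin n => !(decide ((j : ℕ) < n / 2)))).Nodup :=
          hnd.filter _
        rw [← List.toFinset_card_of_nodup hndq]
        have hinj := Finset.card_le_card_of_injOn
          (s := (l.filter (fun j : Fin n => !(decide ((j : ℕ) < n / 2)))).toFinset)
          (t := (Finset.univ : Finset (Fin (n / 2))))
          (fun j : Fin n => (⟨(j : ℕ) % (n / 2), Nat.mod_lt _ (by omega)⟩ : Fin (n / 2)))
          (fun a _ => Finset.mem_univ _) ?_
        · simpa using hinj
        · intro a ha b hb hab
          have hamem := List.mem_toFinset.mp ha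
          have hbmem := List.mem_toFinset.mp hb
          rw [List.mem_filter] at hamem hbmem
          have ha2 : ¬ ((a : ℕ) < n / 2) := by simpa using hamem.2
          have hb2 : ¬ ((b : ℕ) < n / 2) := by simpa using hbmem.2
          have hmoda : (a : ℕ) % (n / 2) = (a : ℕ) - n / 2 := by
            rw [Nat.mod_eq_sub_mod (by omega)]
            exact Nat.mod_eq_of_lt (by have := a.isLt; omega)
          have hmodb : (b : ℕ) % (n / 2) = (b : ℕ) - n / 2 := by
            rw [Nat.mod_eq_sub_mod (by omega)]
            exact Nat.mod_eq_of_lt (by have := b.isLt; omega)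
          have := congrArg Fin.val hab
          simp only at this
          rw [hmoda, hmodb] at this
          exact Fin.ext (by have := a.isLt; have := b.isLt; omega)
      have hsplit := (List.filter_append_perm
        (fun j : Fin n => decide ((j : ℕ) < n / 2)) l).length_eq
      rw [List.length_append] at hsplit
      omega
  have hlcsn : lcsLen (List.ofFn ⇑π') (List.ofFn ⇑σ') ≤ n :=
    lcsLen_le fun l hA _ => by simpa using hA.length_le
  show d ≤ n - lcsLen (List.ofFn ⇑π') (List.ofFn ⇑σ')
  omega
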